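/- Let G be a bipartite graph with parts A and B, |A| ≤ |B|, and minimum degree δ ≥ |B|/2 + 1. Then G contains a cycle of length t for every even t with 4 ≤ t ≤ 2(2δ - |A| - 1). -/

import Mathlib

open SimpleGraph Finset

/-- `G` contains a cycle of length `t`. -/
def HasCycleLen {V : Type*} (G : SimpleGraph V) (t : ℕ) : Prop :=
  ∃ (v : V) (w : G.Walk v v), w.IsCycle ∧ w.length = t

private lemma mem_concat'' {α : Type*} {a b : α} {l : List α} :
    a ∈ l ++ [b] ↔ a ∈ l ∨ a = b := by
  simp

private lemma isPath_concat' {V : Type*} {G : SimpleGraph V} {u v w : V}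
    {p : G.Walk u v} (hp : p.IsPath) (h : G.Adj v w) (hw : w ∉ p.support) :
    (p.concat h).IsPath := by
  rw [Walk.isPath_def, Walk.support_concat, List.nodup_append]
  refine ⟨hp.support_nodup, List.nodup_singleton w, ?_⟩
  intro x hx y hy hxy
  simp only [List.mem_singleton] at hy
  exact hw (hy ▸ hxy ▸ hx)

/-- In a bipartite graph with parts `A`, `B`, `|A| ≤ |B|` and minimum degree
`δ ≥ |B|/2 + 1`, there is a cycle of every even length `t` with
`4 ≤ t ≤ 2(2δ - |A| - 1)`. -/
theorem bipartite_even_cycles {V : Type*} [Fintype V] [DecidableEq V]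
    (G : SimpleGraph V) [DecidableRel G.Adj] (A B : Finset V)
    (hdisj : Disjoint A B) (hcover : A ∪ B = univ)
    (hbip : ∀ u v, G.Adj u v → (u ∈ A ∧ v ∈ B) ∨ (u ∈ B ∧ v ∈ A))
    (hAB : A.card ≤ B.card)
    (hδ : (B.card : ℚ) / 2 + 1 ≤ (G.minDegree : ℚ)) :
    ∀ t : ℕ, Even t → 4 ≤ t →
      (t : ℤ) ≤ 2 * (2 * (G.minDegree : ℤ) - A.card - 1) →
      HasCycleLen G t := by
  intro t ht_even ht4 htZ
  obtain ⟨k, hk⟩ := ht_even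
  have hk2 : 2 ≤ k := by omega
  have hk0 : 0 < k := by omega
  have hk2d : k + 1 + A.card ≤ 2 * G.minDegree := by omega
  have hd2 : 2 ≤ G.minDegree := by omega
  -- neighbors of B-vertices lie in A
  have hBA : ∀ v ∈ B, G.neighborFinset v ⊆ A := by
    intro v hv u hu
    rw [mem_neighborFinset] at hu
    rcases hbip v u hu with ⟨hvA, _⟩ | ⟨_, huA⟩
    · exact absurd hv (Finset.disjoint_left.mp hdisj hvA)
    · exact huA
  have hVne : Nonempty V := by
    by_contra h
    rw [not_nonempty_iff] at h
    have h0 : G.minDegree = 0 := by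
      simp [SimpleGraph.minDegree, Finset.univ_eq_empty]
    omega
  have hBne : B.Nonempty := by
    by_contra h
    rw [Finset.not_nonempty_iff_eq_empty] at h
    obtain ⟨v⟩ := hVne
    have hvA : v ∈ A := by
      have hv : v ∈ A ∪ B := hcover ▸ Finset.mem_univ v
      rcases Finset.mem_union.mp hv with h' | h'
      · exact h'
      · simp [h] at h'
    have hdeg : G.degree v = 0 := by
      have : G.neighborFinset v = ∅ := by
        ext u
        simp only [mem_neighborFinset, Finset.notMem_empty, iff_false]
        intro hadj
        rcases hbip v u hadj with ⟨_, huB⟩ | ⟨hvB, _⟩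
        · simp [h] at huB
        · simp [h] at hvB
      simp [← card_neighborFinset_eq_degree, this]
    have := G.minDegree_le_degree v
    omega
  have hdA : G.minDegree ≤ A.card := by
    obtain ⟨v, hv⟩ := hBne
    have h1 := G.minDegree_le_degree v
    have h2 : G.degree v ≤ A.card := by
      rw [← card_neighborFinset_eq_degree]
      exact Finset.card_le_card (hBA v hv)
    omega
  have hkB : k ≤ B.card := by omega
  -- any two B-vertices have at least k+1 common neighbors
  have hcommon : ∀ u ∈ B, ∀ v ∈ B,
      k + 1 ≤ ((G.neighborFinset u) ∩ (G.neighborFinset v)).card := by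
    intro u hu v hv
    have h1 := G.minDegree_le_degree u
    have h2 := G.minDegree_le_degree v
    rw [← card_neighborFinset_eq_degree] at h1 h2
    have h3 : (G.neighborFinset u ∪ G.neighborFinset v).card ≤ A.card :=
      Finset.card_le_card (Finset.union_subset (hBA u hu) (hBA v hv))
    have h4 := Finset.card_union_add_card_inter (G.neighborFinset u) (G.neighborFinset v)
    omega
  -- choose k distinct vertices of B, arranged cyclically
  obtain ⟨S, hSB, hScard⟩ := Finset.exists_subset_card_eq hkB
  set b : ℕ → V := fun i =>
    ((S.equivFin.symm (Fin.cast hScard.symm ⟨i % k, Nat.mod_lt i hk0⟩)) : V) with hbdef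
  have hbB : ∀ i, b i ∈ B := fun i => hSB (Subtype.coe_prop _)
  have hbinj : ∀ i < k, ∀ j < k, b i = b j → i = j := by
    intro i hi j hj hij
    have h1 : (⟨i % k, Nat.mod_lt i hk0⟩ : Fin k) = ⟨j % k, Nat.mod_lt j hk0⟩ := by
      have := Subtype.coe_injective hij
      have := S.equivFin.symm.injective this
      exact Fin.cast_injective _ this
    have h2 : i % k = j % k := congrArg Fin.val h1
    rwa [Nat.mod_eq_of_lt hi, Nat.mod_eq_of_lt hj] at h2
  have hbk : b k = b 0 := by
    simp only [hbdef, Nat.mod_self, Nat.zero_mod]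
  have hbA : ∀ i, b i ∉ A := fun i => Finset.disjoint_right.mp hdisj (hbB i)
  -- greedily choose the A-vertices
  have greedy : ∀ j, j ≤ k → ∃ f : ℕ → V,
      (∀ i < j, f i ∈ A ∧ G.Adj (b i) (f i) ∧ G.Adj (f i) (b (i + 1))) ∧
      (∀ i < j, ∀ i' < j, f i = f i' → i = i') := by
    intro j
    induction j with
    | zero =>
      exact fun _ => ⟨fun _ => b 0, fun i hi => absurd hi (by omega),
        fun i hi => absurd hi (by omega)⟩
    | succ j ih =>
      intro hj
      obtain ⟨f, hf1, hf2⟩ := ih (by omega)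
      have hNne : ((G.neighborFinset (b j) ∩ G.neighborFinset (b (j + 1))) \
          (Finset.image f (Finset.range j))).Nonempty := by
        rw [← Finset.card_pos]
        have h1 := hcommon (b j) (hbB j) (b (j + 1)) (hbB (j + 1))
        have h2 : (Finset.image f (Finset.range j)).card ≤ j :=
          (Finset.card_image_le).trans (by simp)
        have h3 := Finset.le_card_sdiff (Finset.image f (Finset.range j))
          (G.neighborFinset (b j) ∩ G.neighborFinset (b (j + 1)))
        omega
      obtain ⟨x, hx⟩ := hNne
      rw [Finset.mem_sdiff, Finset.mem_inter] at hx
      obtain ⟨⟨hx1, hx2⟩, hx3⟩ := hx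
      have hxA : x ∈ A := hBA _ (hbB j) hx1
      rw [mem_neighborFinset] at hx1 hx2
      classical
      set f' : ℕ → V := fun i => if i = j then x else f i with hf'def
      have hf'j : f' j = x := by simp [hf'def]
      have hf'ne : ∀ i, i ≠ j → f' i = f i := by
        intro i hi; simp [hf'def, hi]
      refine ⟨f', ?_, ?_⟩
      · intro i hi
        by_cases hij : i = j
        · subst hij
          rw [hf'j]
          exact ⟨hxA, hx1, hx2.symm⟩
        · rw [hf'ne i hij]
          exact hf1 i (by omega)
      · intro i hi i' hi' hii'
        by_cases h1 : i = j <;> by_cases h2 : i' = j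
        · omega
        · exfalso
          rw [h1, hf'j, hf'ne i' h2] at hii'
          exact hx3 (Finset.mem_image.mpr ⟨i', Finset.mem_range.mpr (by omega), hii'.symm⟩)
        · exfalso
          rw [h2, hf'j, hf'ne i h1] at hii'
          exact hx3 (Finset.mem_image.mpr ⟨i, Finset.mem_range.mpr (by omega), hii'⟩)
        · rw [hf'ne i h1, hf'ne i' h2] at hii'
          exact hf2 i (by omega) i' (by omega) hii'
  obtain ⟨a, ha, hainj⟩ := greedy k le_rfl
  have hba : ∀ i, ∀ i' < k, b i ≠ a i' := fun i i' hi' h => hbA i (h ▸ (ha i' hi').1)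
  -- build the path b 0, a 0, b 1, a 1, ..., b (j-1), a (j-1)
  have path : ∀ j, 1 ≤ j → j ≤ k → ∃ P : G.Walk (b 0) (a (j - 1)),
      P.IsPath ∧ P.length = 2 * j - 1 ∧
      (∀ v ∈ P.support, ∃ i, i < j ∧ (v = b i ∨ v = a i)) ∧
      (∀ e ∈ P.edges, (∃ i, i < j ∧ e = s(b i, a i)) ∨
        (∃ i, i + 1 < j ∧ e = s(a i, b (i + 1)))) := by
    intro j hj
    induction j, hj using Nat.le_induction with
    | base =>
      intro _
      refine ⟨Walk.cons (ha 0 hk0).2.1 Walk.nil, ?_, by simp, ?_, ?_⟩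
      · rw [Walk.isPath_def]
        simp [hba 0 0 hk0]
      · intro v hv
        simp only [Walk.support_cons, Walk.support_nil, List.mem_cons, List.mem_singleton,
          List.not_mem_nil, or_false] at hv
        rcases hv with h | h
        · exact ⟨0, by omega, Or.inl h⟩
        · exact ⟨0, by omega, Or.inr h⟩
      · intro e he
        simp only [Walk.edges_cons, Walk.edges_nil, List.mem_singleton,
          List.not_mem_nil, or_false, List.mem_cons] at he
        exact Or.inl ⟨0, by omega, he⟩
    | succ j hj1 ihj =>
      intro hjk
      obtain ⟨P, hP, hlen, hsup, hedge⟩ := ihj (by omega)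
      have hj' : j - 1 + 1 = j := by omega
      have h1 : G.Adj (a (j - 1)) (b j) := by
        have := (ha (j - 1) (by omega)).2.2
        rwa [hj'] at this
      have h2 : G.Adj (b j) (a j) := (ha j (by omega)).2.1
      have hbjns : b j ∉ P.support := by
        intro hmem
        obtain ⟨i, hi, hcase⟩ := hsup _ hmem
        rcases hcase with h | h
        · have := hbinj j (by omega) i (by omega) h
          omega
        · exact hba j i (by omega) h
      have hajns : a j ∉ (P.concat h1).support := by
        rw [Walk.support_concat]
        intro hmem
        rcases mem_concat''.mp hmem with hmem' | hmem'
        · obtain ⟨i, hi, hcase⟩ := hsup _ hmem'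
          rcases hcase with h | h
          · exact hba i j (by omega) h.symm
          · have := hainj j (by omega) i (by omega) h
            omega
        · exact hba j j (by omega) hmem'.symm
      have hswap : a (j + 1 - 1) = a j := by norm_num
      refine ⟨hswap ▸ ((P.concat h1).concat h2), ?_, ?_, ?_, ?_⟩
      · cases hswap
        exact isPath_concat' (isPath_concat' hP h1 hbjns) h2 hajns
      · cases hswap
        rw [Walk.length_concat, Walk.length_concat]
        omega
      · cases hswap
        intro v hv
        rw [Walk.support_concat] at hv
        rcases mem_concat''.mp hv with hv' | hv'
        · rw [Walk.support_concat] at hv'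
          rcases mem_concat''.mp hv' with hv'' | hv''
          · obtain ⟨i, hi, hcase⟩ := hsup _ hv''
            exact ⟨i, by omega, hcase⟩
          · exact ⟨j, by omega, Or.inl hv''⟩
        · exact ⟨j, by omega, Or.inr hv'⟩
      · cases hswap
        intro e he
        rw [Walk.edges_concat, List.concat_eq_append] at he
        rcases mem_concat''.mp he with he' | he'
        · rw [Walk.edges_concat, List.concat_eq_append] at he'
          rcases mem_concat''.mp he' with he'' | he''
          · rcases hedge _ he'' with ⟨i, hi, hei⟩ | ⟨i, hi, hei⟩
            · exact Or.inl ⟨i, by omega, hei⟩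
            · exact Or.inr ⟨i, by omega, hei⟩
          · refine Or.inr ⟨j - 1, by omega, ?_⟩
            rw [hj', he'']
        · exact Or.inl ⟨j, by omega, he'⟩
  obtain ⟨P, hP, hlen, hsup, hedge⟩ := path k (by omega) le_rfl
  have hadj : G.Adj (b 0) (a (k - 1)) := by
    have h := (ha (k - 1) (by omega)).2.2
    rw [show k - 1 + 1 = k from by omega, hbk] at h
    exact h.symm
  refine ⟨b 0, Walk.cons hadj P.reverse, ?_, ?_⟩
  · rw [SimpleGraph.Walk.cons_isCycle_iff]
    refine ⟨(Walk.isPath_reverse_iff P).mpr hP, ?_⟩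
    rw [Walk.edges_reverse, List.mem_reverse]
    intro hmem
    rcases hedge _ hmem with ⟨i, hik, hei⟩ | ⟨i, hik, hei⟩
    · rcases Sym2.eq_iff.mp hei with ⟨e1, e2⟩ | ⟨e1, e2⟩
      · have hb0 := hbinj 0 (by omega) i (by omega) e1
        have ha0 := hainj (k - 1) (by omega) i (by omega) e2
        omega
      · exact hba 0 i (by omega) e1
    · rcases Sym2.eq_iff.mp hei with ⟨e1, e2⟩ | ⟨e1, e2⟩
      · exact hba 0 i (by omega) e1
      · have := hbinj 0 (by omega) (i + 1) (by omega) e1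
        omega
  · rw [Walk.length_cons, Walk.length_reverse]
    omega
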